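/- arXiv:1203.3836 — 4 statements merged into one kernel-verified Lean document; each statement's English description precedes it below -/
import Mathlib

section
/- Let (Γ, α, θ, λ) be a 3-independent 1-skeleton in ℝ^n. Then every 2-valent subskeleton of (Γ, α, θ, λ) — in particular every 2-face, when a polarizing covector exists — is level. -/
open SimpleGraph

universe u u' v

variable {V : Type u}

/-- The type of connections on a graph: for each oriented edge (given by an adjacency proof),
a bijection between the neighbor set of the initial vertex and that of the terminal vertex. -/
abbrev GraphConn {V : Type u} (G : SimpleGraph V) : Type u :=
  ∀ ⦃p q : V⦄, G.Adj p q → (↥(G.neighborSet p) ≃ ↥(G.neighborSet q))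

/-- The type of compatibility systems: for each oriented edge, a real-valued function on the
oriented edges at the initial vertex. -/
abbrev CompatSys {V : Type u} (G : SimpleGraph V) : Type u :=
  ∀ ⦃p q : V⦄, G.Adj p q → (↥(G.neighborSet p) → ℝ)

/-- The type of (generalized) axial functions with values in `W`. -/
abbrev AxialFn {V : Type u} (G : SimpleGraph V) (W : Type v) : Type (max u v) :=
  ∀ ⦃p q : V⦄, G.Adj p q → W

/-- The `G`-adjacency underlying an element of a neighbor set. -/
def nadj {G : SimpleGraph V} {p : V} (e : ↥(G.neighborSet p)) : G.Adj p ↑e := e.2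

/-- `θ` is a connection: `θ_e e = ē` and `θ_{ē} = θ_e⁻¹`. -/
def IsConnection (G : SimpleGraph V) (θ : GraphConn G) : Prop :=
  (∀ ⦃p q : V⦄ (h : G.Adj p q), θ h ⟨q, h⟩ = ⟨p, h.symm⟩) ∧
  (∀ ⦃p q : V⦄ (h : G.Adj p q), θ h.symm = (θ h).symm)

/-- `lam` is a compatibility system for `(G, θ)`: positive values with
`λ_{ē}(θ_e e') = 1 / λ_e(e')`. -/
def IsCompatSystem (G : SimpleGraph V) (θ : GraphConn G) (lam : CompatSys G) : Prop :=
  (∀ ⦃p q : V⦄ (h : G.Adj p q) (e : ↥(G.neighborSet p)), 0 < lam h e) ∧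
  (∀ ⦃p q : V⦄ (h : G.Adj p q) (e : ↥(G.neighborSet p)),
      lam h.symm (θ h e) = (lam h e)⁻¹)

section Axial

variable {W : Type v} [AddCommGroup W] [Module ℝ W]

/-- `α` is a generalized axial function for `(G, θ, λ)`: (gA1) `α(e) = -m_e • α(ē)` for some
`m_e > 0`, and (gA2) `α(e') - λ_e(e') • α(θ_e(e'))` is a scalar multiple of `α(e)` for `e' ≠ e`
at the initial vertex of `e`. -/
def IsGenAxial (G : SimpleGraph V) (θ : GraphConn G) (lam : CompatSys G)
    (α : AxialFn G W) : Prop :=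
  (∀ ⦃p q : V⦄ (h : G.Adj p q), ∃ m : ℝ, 0 < m ∧ α h = -(m • α h.symm)) ∧
  (∀ ⦃p q : V⦄ (h : G.Adj p q) (e : ↥(G.neighborSet p)), (↑e : V) ≠ q →
      ∃ c : ℝ, α (nadj e) - lam h e • α (nadj (θ h e)) = c • α h)

/-- The quadruple `(G, θ, λ, α)` is a generalized 1-skeleton (on a connected graph). -/
structure IsGenSkeleton (G : SimpleGraph V) (θ : GraphConn G) (lam : CompatSys G)
    (α : AxialFn G W) : Prop where
  connected : G.Connected
  conn : IsConnection G θ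
  compat : IsCompatSystem G θ lam
  axial : IsGenAxial G θ lam α

/-- The extra axioms making a generalized 1-skeleton an honest 1-skeleton:
`α(ē) = -α(e)` and pairwise linear independence at each vertex. -/
def IsSkeletal (G : SimpleGraph V) (α : AxialFn G W) : Prop :=
  (∀ ⦃p q : V⦄ (h : G.Adj p q), α h.symm = -α h) ∧
  (∀ (p : V) (e e' : ↥(G.neighborSet p)), e ≠ e' →
      LinearIndependent ℝ ![α (nadj e), α (nadj e')])

/-- `(G, θ, λ, α)` is a 1-skeleton. -/
def IsOneSkeleton (G : SimpleGraph V) (θ : GraphConn G) (lam : CompatSys G)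
    (α : AxialFn G W) : Prop :=
  IsGenSkeleton G θ lam α ∧ IsSkeletal G α

/-- `G` is `d`-valent. -/
def Valency (G : SimpleGraph V) (d : ℕ) : Prop :=
  ∀ p : V, (G.neighborSet p).ncard = d

/-- `α` is `k`-independent. -/
def kIndep (G : SimpleGraph V) (α : AxialFn G W) (k : ℕ) : Prop :=
  ∀ (p : V) (s : Finset ↥(G.neighborSet p)), s.card = k →
    LinearIndependent ℝ (fun e : ↥(↑s : Set ↥(G.neighborSet p)) => α (nadj (e : ↥(G.neighborSet p))))

/-- `α` is effective: the axial vectors at each vertex span the target space. -/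
def EffectiveAxial (G : SimpleGraph V) (α : AxialFn G W) : Prop :=
  ∀ p : V, Submodule.span ℝ (Set.range fun e : ↥(G.neighborSet p) => α (nadj e)) = ⊤

/-- A covector is generic if it pairs nonzero with each axial vector. -/
def GenericCovec (G : SimpleGraph V) (α : AxialFn G W) (ξ : W →ₗ[ℝ] ℝ) : Prop :=
  ∀ ⦃p q : V⦄ (h : G.Adj p q), ξ (α h) ≠ 0

/-- The directed-edge relation induced by a covector. -/
def dirRel (G : SimpleGraph V) (α : AxialFn G W) (ξ : W →ₗ[ℝ] ℝ) : V → V → Prop :=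
  fun p q => ∃ h : G.Adj p q, 0 < ξ (α h)

/-- A generic covector is polarizing if the induced orientation has no directed cycles. -/
def PolarizingCovec (G : SimpleGraph V) (α : AxialFn G W) (ξ : W →ₗ[ℝ] ℝ) : Prop :=
  GenericCovec G α ξ ∧ ∀ p : V, ¬ Relation.TransGen (dirRel G α ξ) p p

/-- A Morse function compatible with a (polarizing) covector. -/
def MorseCompat (G : SimpleGraph V) (α : AxialFn G W) (ξ : W →ₗ[ℝ] ℝ) (φ : V → ℝ) : Prop :=
  Function.Injective φ ∧ ∀ ⦃p q : V⦄ (h : G.Adj p q), 0 < ξ (α h) → φ p < φ q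

/-- An embedding of a 1-skeleton. -/
def IsSkelEmbedding (G : SimpleGraph V) (α : AxialFn G W) (f : V → W) : Prop :=
  ∀ ⦃p q : V⦄ (h : G.Adj p q), ∃ c : ℝ, 0 < c ∧ f q - f p = c • α h

end Axial
section Sub

variable {W : Type v} [AddCommGroup W] [Module ℝ W]

/-- Transport of oriented edges along a walk, via the connection. -/
def transport {G : SimpleGraph V} (θ : GraphConn G) :
    ∀ {p q : V}, G.Walk p q → ↥(G.neighborSet p) → ↥(G.neighborSet q)
  | _, _, SimpleGraph.Walk.nil, e => e
  | _, _, SimpleGraph.Walk.cons h w, e => transport θ w (θ h e)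

/-- The local path-connection number of an oriented edge along a walk. -/
def transNum {G : SimpleGraph V} (θ : GraphConn G) (lam : CompatSys G) :
    ∀ {p q : V}, G.Walk p q → ↥(G.neighborSet p) → ℝ
  | _, _, SimpleGraph.Walk.nil, _ => 1
  | _, _, SimpleGraph.Walk.cons h w, e => lam h e * transNum θ lam w (θ h e)

/-- A walk of `G` lies in the subgraph `H` if all its darts are edges of `H`. -/
def WalkIn {G : SimpleGraph V} (H : G.Subgraph) {p q : V} (w : G.Walk p q) : Prop :=
  ∀ d ∈ w.darts, H.Adj d.toProd.1 d.toProd.2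

/-- A subskeleton: a connected regular totally geodesic subgraph. -/
structure IsSubskeleton {G : SimpleGraph V} (θ : GraphConn G) (H : G.Subgraph) : Prop where
  connected : H.Connected
  regular : ∃ k : ℕ, ∀ p ∈ H.verts, (H.neighborSet p).ncard = k
  geodesic : ∀ ⦃p q : V⦄ (h : H.Adj p q) (e : ↥(G.neighborSet p)),
      H.Adj p ↑e → H.Adj q ↑(θ (H.adj_sub h) e)

/-- The subskeleton `H` has trivial normal holonomy. -/
def TrivialNormalHolonomy {G : SimpleGraph V} (θ : GraphConn G) (H : G.Subgraph) : Prop :=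
  ∀ (p : V) (w : G.Walk p p), WalkIn H w →
    ∀ e : ↥(G.neighborSet p), ¬ H.Adj p ↑e → transport θ w e = e

/-- The subskeleton `H` is level. -/
def LevelSub {G : SimpleGraph V} (θ : GraphConn G) (lam : CompatSys G)
    (H : G.Subgraph) : Prop :=
  ∀ (p : V) (w : G.Walk p p), WalkIn H w →
    ∀ e : ↥(G.neighborSet p), ¬ H.Adj p ↑e → transport θ w e = e →
      transNum θ lam w e = 1

/-- The index of a vertex of a subgraph with respect to a covector. -/
noncomputable def subIndex {G : SimpleGraph V} (α : AxialFn G W) (ξ : W →ₗ[ℝ] ℝ)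
    (H : G.Subgraph) (p : V) : ℕ :=
  {q : V | ∃ h : H.Adj p q, ξ (α (H.adj_sub h)) < 0}.ncard

/-- `b₀` of a subgraph with respect to a covector: the number of index-zero vertices. -/
noncomputable def subB0 {G : SimpleGraph V} (α : AxialFn G W) (ξ : W →ₗ[ℝ] ℝ)
    (H : G.Subgraph) : ℕ :=
  {p : V | p ∈ H.verts ∧ subIndex α ξ H p = 0}.ncard

/-- A 2-face: a 2-valent subskeleton with `b₀ = 1` (computed with the covector `ξ`). -/
def IsTwoFace {G : SimpleGraph V} (θ : GraphConn G) (α : AxialFn G W) (ξ : W →ₗ[ℝ] ℝ)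
    (H : G.Subgraph) : Prop :=
  IsSubskeleton θ H ∧ (∀ p ∈ H.verts, (H.neighborSet p).ncard = 2) ∧ subB0 α ξ H = 1

/-- Enough 2-faces: any two distinct oriented edges at a vertex lie on a unique 2-face. -/
def EnoughTwoFaces (G : SimpleGraph V) (θ : GraphConn G) (α : AxialFn G W)
    (ξ : W →ₗ[ℝ] ℝ) : Prop :=
  ∀ (p : V) (e e' : ↥(G.neighborSet p)), e ≠ e' →
    ∃! H : G.Subgraph, IsTwoFace θ α ξ H ∧ H.Adj p ↑e ∧ H.Adj p ↑e'

/-- A 1-skeleton is reducible if it admits a polarizing covector and has enough 2-faces. -/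
def ReducibleSkel (G : SimpleGraph V) (θ : GraphConn G) (α : AxialFn G W) : Prop :=
  ∃ ξ : W →ₗ[ℝ] ℝ, PolarizingCovec G α ξ ∧ EnoughTwoFaces G θ α ξ

/-- A total lift: an effective generalized axial function `A` for the same `(G, θ, λ)` with
values in `ℝ^d` (`d` the valency), together with a surjective linear map `L` with `α = L ∘ A`. -/
def HasTotalLift (G : SimpleGraph V) (θ : GraphConn G) (lam : CompatSys G)
    (α : AxialFn G W) (d : ℕ) : Prop :=
  ∃ A : AxialFn G (Fin d → ℝ),
    IsGenAxial G θ lam A ∧ EffectiveAxial G A ∧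
    ∃ L : (Fin d → ℝ) →ₗ[ℝ] W, Function.Surjective L ∧
      ∀ ⦃p q : V⦄ (h : G.Adj p q), α h = L (A h)

/-- Equivalence of generalized 1-skeleta on the same graph-connection pair. -/
def EquivGenSkel (G : SimpleGraph V) (θ : GraphConn G) (lam lam' : CompatSys G)
    (α α' : AxialFn G W) : Prop :=
  ∃ κ : ∀ ⦃p q : V⦄, G.Adj p q → ℝ,
    (∀ ⦃p q : V⦄ (h : G.Adj p q), 0 < κ h) ∧
    (∀ ⦃p q : V⦄ (h : G.Adj p q), α h = κ h • α' h) ∧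
    (∀ ⦃p q : V⦄ (h : G.Adj p q) (e : ↥(G.neighborSet p)),
        lam h e = (κ (nadj e) / κ (nadj (θ h e))) * lam' h e)

/-- The graph whose edges are the edges of `G` with axial vector in the subspace `Hs`. -/
def sliceGraph (G : SimpleGraph V) (α : AxialFn G W) (Hs : Submodule ℝ W) :
    SimpleGraph V where
  Adj p q := ∃ h : G.Adj p q, α h ∈ Hs ∧ α h.symm ∈ Hs
  symm := by
    constructor
    intro p q ⟨h, h1, h2⟩
    exact ⟨h.symm, h2, h1⟩
  loopless := by
    constructor
    intro p ⟨h, _⟩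
    exact G.loopless.irrefl p h

/-- The connected component of `v` in the slice graph, as a subgraph of `G`. -/
def sliceComponent (G : SimpleGraph V) (α : AxialFn G W) (Hs : Submodule ℝ W) (v : V) :
    G.Subgraph where
  verts := {w : V | (sliceGraph G α Hs).Reachable v w}
  Adj p q := (sliceGraph G α Hs).Adj p q ∧ (sliceGraph G α Hs).Reachable v p ∧
    (sliceGraph G α Hs).Reachable v q
  adj_sub := fun h => h.1.1
  edge_vert := fun h => h.2.1
  symm := ⟨fun p q h => ⟨h.1.symm, h.2.2, h.2.1⟩⟩

/-- Pointedness of a subgraph (e.g. a slice): for every covector nonvanishing on its edges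
there is a unique source vertex. -/
def SubPointed {G : SimpleGraph V} (α : AxialFn G W) (H : G.Subgraph) : Prop :=
  ∀ ξ : W →ₗ[ℝ] ℝ, (∀ ⦃p q : V⦄ (h : H.Adj p q), ξ (α (H.adj_sub h)) ≠ 0) →
    ∃! p : V, p ∈ H.verts ∧ ∀ ⦃q : V⦄ (h : H.Adj p q), 0 < ξ (α (H.adj_sub h))

/-- Pointedness of the whole skeleton: for every generic covector there is a unique source. -/
def PointedSkel (G : SimpleGraph V) (α : AxialFn G W) : Prop :=
  ∀ ξ : W →ₗ[ℝ] ℝ, GenericCovec G α ξ →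
    ∃! p : V, ∀ ⦃q : V⦄ (h : G.Adj p q), 0 < ξ (α h)

/-- A 3-independent 1-skeleton is noncyclic if it admits a polarizing covector and every
2-slice is pointed. -/
def Noncyclic (G : SimpleGraph V) (α : AxialFn G W) : Prop :=
  kIndep G α 3 ∧ (∃ ξ : W →ₗ[ℝ] ℝ, PolarizingCovec G α ξ) ∧
  ∀ (Hs : Submodule ℝ W), Module.finrank ℝ ↥Hs = 2 → ∀ v : V,
    SubPointed α (sliceComponent G α Hs v)

/-- A `d`-valent `d`-independent 1-skeleton is toral if every slice is pointed. -/
def Toral (G : SimpleGraph V) (α : AxialFn G W) : Prop :=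
  ∀ (Hs : Submodule ℝ W) (v : V), SubPointed α (sliceComponent G α Hs v)

end Sub
section CrossSection

variable {Vc : Type u'} {W : Type v} [AddCommGroup W] [Module ℝ W]

/-- Specification of the *down* `c`-cross-section of a reducible 1-skeleton `(G, θ, λ, α)`
with polarizing covector `ξ`, compatible Morse function `φ`, and regular value `c`.
`νm` identifies the vertices of the cross-section graph `Gc` with the oriented edges of `G`
at `c`-level; `face` assigns to each oriented edge of `Gc` the corresponding 2-face of `G`
at `c`-level; `θc`, `λc`, `αc` are the down connection, down compatibility system and down
axial function, characterized by normal transport along lower paths. -/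
structure IsDownCrossSection (G : SimpleGraph V) (θ : GraphConn G) (lam : CompatSys G)
    (α : AxialFn G W) (ξ : W →ₗ[ℝ] ℝ) (φ : V → ℝ) (c : ℝ)
    (Gc : SimpleGraph Vc) (νm : Vc → V × V) (θc : GraphConn Gc) (lamc : CompatSys Gc)
    (αc : AxialFn Gc ↥(LinearMap.ker ξ))
    (face : ∀ ⦃x y : Vc⦄, Gc.Adj x y → G.Subgraph) : Prop where
  nu_inj : Function.Injective νm
  nu_level : ∀ x : Vc, ∃ _ : G.Adj (νm x).1 (νm x).2, φ (νm x).1 < c ∧ c < φ (νm x).2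
  nu_surj : ∀ ⦃p q : V⦄, G.Adj p q → φ p < c → c < φ q → ∃ x : Vc, νm x = (p, q)
  conn_c : IsConnection Gc θc
  compat_c : IsCompatSystem Gc θc lamc
  face_two : ∀ ⦃x y : Vc⦄ (h : Gc.Adj x y), IsTwoFace θ α ξ (face h)
  face_symm : ∀ ⦃x y : Vc⦄ (h : Gc.Adj x y), face h.symm = face h
  face_init : ∀ ⦃x y : Vc⦄ (h : Gc.Adj x y), (face h).Adj (νm x).1 (νm x).2
  face_inj : ∀ ⦃x y y' : Vc⦄ (h : Gc.Adj x y) (h' : Gc.Adj x y'), face h = face h' → y = y'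
  face_surj : ∀ Q : G.Subgraph, IsTwoFace θ α ξ Q →
      ∀ ⦃p q : V⦄, Q.Adj p q → φ p < c → c < φ q →
        ∃ (x y : Vc) (h : Gc.Adj x y), νm x = (p, q) ∧ face h = Q
  conn_spec : ∀ ⦃x y : Vc⦄ (h : Gc.Adj x y) (x' : ↥(Gc.neighborSet x)), (↑x' : Vc) ≠ y →
      ∀ e : ↥(G.neighborSet (νm x).1),
        (face (nadj x')).Adj (νm x).1 ↑e → (↑e : V) ≠ (νm x).2 →
      ∀ e' : ↥(G.neighborSet (νm y).1),
        (face (nadj (θc h x'))).Adj (νm y).1 ↑e' → (↑e' : V) ≠ (νm y).2 →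
      ∀ (wlk : G.Walk (νm x).1 (νm y).1), WalkIn (face h) wlk →
        (∀ z ∈ wlk.support, φ z < c) →
        transport θ wlk e = e'
  lam_spec : ∀ ⦃x y : Vc⦄ (h : Gc.Adj x y) (x' : ↥(Gc.neighborSet x)), (↑x' : Vc) ≠ y →
      ∀ e : ↥(G.neighborSet (νm x).1),
        (face (nadj x')).Adj (νm x).1 ↑e → (↑e : V) ≠ (νm x).2 →
      ∀ (wlk : G.Walk (νm x).1 (νm y).1), WalkIn (face h) wlk →
        (∀ z ∈ wlk.support, φ z < c) →
        transNum θ lam wlk e = lamc h x'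
  alpha_spec : ∀ ⦃x y : Vc⦄ (h : Gc.Adj x y) (hpq : G.Adj (νm x).1 (νm x).2)
      (e : ↥(G.neighborSet (νm x).1)),
      (face h).Adj (νm x).1 ↑e → (↑e : V) ≠ (νm x).2 →
      (↑(αc h) : W) = α (nadj e) - (ξ (α (nadj e)) / ξ (α hpq)) • α hpq

/-- Specification of the *up* `c`-cross-section; as `IsDownCrossSection`, but using normal
transport along upper paths and the up axial function. -/
structure IsUpCrossSection (G : SimpleGraph V) (θ : GraphConn G) (lam : CompatSys G)
    (α : AxialFn G W) (ξ : W →ₗ[ℝ] ℝ) (φ : V → ℝ) (c : ℝ)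
    (Gc : SimpleGraph Vc) (νm : Vc → V × V) (θc : GraphConn Gc) (lamc : CompatSys Gc)
    (αc : AxialFn Gc ↥(LinearMap.ker ξ))
    (face : ∀ ⦃x y : Vc⦄, Gc.Adj x y → G.Subgraph) : Prop where
  nu_inj : Function.Injective νm
  nu_level : ∀ x : Vc, ∃ _ : G.Adj (νm x).1 (νm x).2, φ (νm x).1 < c ∧ c < φ (νm x).2
  nu_surj : ∀ ⦃p q : V⦄, G.Adj p q → φ p < c → c < φ q → ∃ x : Vc, νm x = (p, q)
  conn_c : IsConnection Gc θc
  compat_c : IsCompatSystem Gc θc lamc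
  face_two : ∀ ⦃x y : Vc⦄ (h : Gc.Adj x y), IsTwoFace θ α ξ (face h)
  face_symm : ∀ ⦃x y : Vc⦄ (h : Gc.Adj x y), face h.symm = face h
  face_init : ∀ ⦃x y : Vc⦄ (h : Gc.Adj x y), (face h).Adj (νm x).1 (νm x).2
  face_inj : ∀ ⦃x y y' : Vc⦄ (h : Gc.Adj x y) (h' : Gc.Adj x y'), face h = face h' → y = y'
  face_surj : ∀ Q : G.Subgraph, IsTwoFace θ α ξ Q →
      ∀ ⦃p q : V⦄, Q.Adj p q → φ p < c → c < φ q →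
        ∃ (x y : Vc) (h : Gc.Adj x y), νm x = (p, q) ∧ face h = Q
  conn_spec : ∀ ⦃x y : Vc⦄ (h : Gc.Adj x y) (x' : ↥(Gc.neighborSet x)), (↑x' : Vc) ≠ y →
      ∀ e : ↥(G.neighborSet (νm x).2),
        (face (nadj x')).Adj (νm x).2 ↑e → (↑e : V) ≠ (νm x).1 →
      ∀ e' : ↥(G.neighborSet (νm y).2),
        (face (nadj (θc h x'))).Adj (νm y).2 ↑e' → (↑e' : V) ≠ (νm y).1 →
      ∀ (wlk : G.Walk (νm x).2 (νm y).2), WalkIn (face h) wlk →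
        (∀ z ∈ wlk.support, c < φ z) →
        transport θ wlk e = e'
  lam_spec : ∀ ⦃x y : Vc⦄ (h : Gc.Adj x y) (x' : ↥(Gc.neighborSet x)), (↑x' : Vc) ≠ y →
      ∀ e : ↥(G.neighborSet (νm x).2),
        (face (nadj x')).Adj (νm x).2 ↑e → (↑e : V) ≠ (νm x).1 →
      ∀ (wlk : G.Walk (νm x).2 (νm y).2), WalkIn (face h) wlk →
        (∀ z ∈ wlk.support, c < φ z) →
        transNum θ lam wlk e = lamc h x'
  alpha_spec : ∀ ⦃x y : Vc⦄ (h : Gc.Adj x y) (hpq : G.Adj (νm x).1 (νm x).2)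
      (e : ↥(G.neighborSet (νm x).2)),
      (face h).Adj (νm x).2 ↑e → (↑e : V) ≠ (νm x).1 →
      (↑(αc h) : W) = α (nadj e) - (ξ (α (nadj e)) / ξ (α hpq.symm)) • α hpq.symm

end CrossSection
section BlowUp

variable {V' : Type u'} {W : Type v} [AddCommGroup W] [Module ℝ W]

/-- A blow-up system for the subskeleton `H`: positive scalars on the normal edges with
`n(e') = λ_e(e') · n(θ_e(e'))` along edges of `H`. -/
def IsBlowUpSystem {G : SimpleGraph V} (θ : GraphConn G) (lam : CompatSys G)
    (H : G.Subgraph) (n : ∀ p : V, ↥(G.neighborSet p) → ℝ) : Prop :=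
  (∀ p ∈ H.verts, ∀ e : ↥(G.neighborSet p), ¬ H.Adj p ↑e → 0 < n p e) ∧
  (∀ ⦃p q : V⦄ (h : H.Adj p q) (e : ↥(G.neighborSet p)), ¬ H.Adj p ↑e →
      n p e = lam (H.adj_sub h) e * n q (θ (H.adj_sub h) e))

/-- No normal edge of `H` has its terminal vertex in `H`. -/
def NoChord {G : SimpleGraph V} (H : G.Subgraph) : Prop :=
  ∀ p ∈ H.verts, ∀ e : ↥(G.neighborSet p), ¬ H.Adj p ↑e → (↑e : V) ∉ H.verts

/-- Specification of the blow-up `(G', θ', λ', α')` of the generalized 1-skeleton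
`(G, θ, λ, α)` along the subskeleton `H`, with respect to the blow-up system `n`.
`β` is the blow-down map on vertices and `z p e` is the singular-locus vertex `z^p_e`
(for `p ∈ H.verts` and `e` normal to `H` at `p`). -/
structure IsBlowUp (G : SimpleGraph V) (θ : GraphConn G) (lam : CompatSys G)
    (α : AxialFn G W) (H : G.Subgraph) (n : ∀ p : V, ↥(G.neighborSet p) → ℝ)
    (G' : SimpleGraph V') (θ' : GraphConn G') (lam' : CompatSys G') (α' : AxialFn G' W)
    (β : V' → V) (z : ∀ p : V, ↥(G.neighborSet p) → V') : Prop where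
  conn' : IsConnection G' θ'
  compat' : IsCompatSystem G' θ' lam'
  beta_z : ∀ p ∈ H.verts, ∀ e : ↥(G.neighborSet p), ¬ H.Adj p ↑e → β (z p e) = p
  z_inj : ∀ ⦃p p' : V⦄, p ∈ H.verts → p' ∈ H.verts →
      ∀ ⦃e : ↥(G.neighborSet p)⦄ ⦃e' : ↥(G.neighborSet p')⦄,
        ¬ H.Adj p ↑e → ¬ H.Adj p' ↑e' → z p e = z p' e' → p = p' ∧ (↑e : V) = ↑e'
  sing_surj : ∀ x' : V', β x' ∈ H.verts →
      ∃ (p : V) (_ : p ∈ H.verts) (e : ↥(G.neighborSet p)), ¬ H.Adj p ↑e ∧ x' = z p e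
  beta_inj : ∀ ⦃x' y' : V'⦄, β x' = β y' → β x' ∉ H.verts → x' = y'
  beta_surj : ∀ x : V, x ∉ H.verts → ∃ x' : V', β x' = x
  adj_iff : ∀ x' y' : V', G'.Adj x' y' ↔
      ((β x' ∉ H.verts ∧ β y' ∉ H.verts ∧ G.Adj (β x') (β y')) ∨
       (∃ (p : V) (_ : p ∈ H.verts) (e : ↥(G.neighborSet p)) (_ : ¬ H.Adj p ↑e),
          (x' = z p e ∧ β y' = ↑e ∧ β y' ∉ H.verts) ∨
          (y' = z p e ∧ β x' = ↑e ∧ β x' ∉ H.verts)) ∨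
       (∃ (p : V) (_ : p ∈ H.verts) (e e' : ↥(G.neighborSet p))
          (_ : ¬ H.Adj p ↑e) (_ : ¬ H.Adj p ↑e'),
          (↑e : V) ≠ ↑e' ∧ x' = z p e ∧ y' = z p e') ∨
       (∃ (p q : V) (hpq : H.Adj p q) (e : ↥(G.neighborSet p)) (_ : ¬ H.Adj p ↑e),
          x' = z p e ∧ y' = z q (θ (H.adj_sub hpq) e)))
  proj_adj : ∀ ⦃x' w' : V'⦄, G'.Adj x' w' → β x' ∉ H.verts → G.Adj (β x') (β w')
  -- axial function
  alpha_ns : ∀ ⦃x' y' : V'⦄ (h' : G'.Adj x' y'), β x' ∉ H.verts →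
      ∀ (h : G.Adj (β x') (β y')), α' h' = α h
  alpha_t : ∀ ⦃p : V⦄, p ∈ H.verts → ∀ (e : ↥(G.neighborSet p)), ¬ H.Adj p ↑e →
      ∀ ⦃y' : V'⦄ (h' : G'.Adj (z p e) y'), β y' = ↑e →
        α' h' = (n p e)⁻¹ • α (nadj e)
  alpha_h : ∀ ⦃p q : V⦄ (hpq : H.Adj p q) (e : ↥(G.neighborSet p)), ¬ H.Adj p ↑e →
      ∀ (h' : G'.Adj (z p e) (z q (θ (H.adj_sub hpq) e))), α' h' = α (H.adj_sub hpq)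
  alpha_v : ∀ ⦃p : V⦄, p ∈ H.verts →
      ∀ (e e' : ↥(G.neighborSet p)), ¬ H.Adj p ↑e → ¬ H.Adj p ↑e' → (↑e : V) ≠ ↑e' →
      ∀ (h' : G'.Adj (z p e) (z p e')),
        α' h' = α (nadj e') - (n p e' / n p e) • α (nadj e)
  -- connection, on edges not issuing from the singular locus
  conn_ns : ∀ ⦃x' y' : V'⦄ (h' : G'.Adj x' y'), β x' ∉ H.verts → β y' ∉ H.verts →
      ∀ (h : G.Adj (β x') (β y')) (w' : ↥(G'.neighborSet x')) (w : ↥(G.neighborSet (β x'))),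
        (↑w : V) = β ↑w' → β ↑(θ' h' w') = ↑(θ h w)
  -- connection along `z^p_e → t(e)`
  conn_t_v : ∀ ⦃p : V⦄, p ∈ H.verts → ∀ (e : ↥(G.neighborSet p)), ¬ H.Adj p ↑e →
      ∀ ⦃y' : V'⦄ (h' : G'.Adj (z p e) y'), β y' = ↑e →
      ∀ (e'' : ↥(G.neighborSet p)), ¬ H.Adj p ↑e'' → (↑e'' : V) ≠ ↑e →
      ∀ (w' : ↥(G'.neighborSet (z p e))), (↑w' : V') = z p e'' →
        β ↑(θ' h' w') = ↑(θ (nadj e) e'')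
  conn_t_h : ∀ ⦃p : V⦄, p ∈ H.verts → ∀ (e : ↥(G.neighborSet p)), ¬ H.Adj p ↑e →
      ∀ ⦃y' : V'⦄ (h' : G'.Adj (z p e) y'), β y' = ↑e →
      ∀ ⦃r : V⦄ (hpr : H.Adj p r)
        (w' : ↥(G'.neighborSet (z p e))), (↑w' : V') = z r (θ (H.adj_sub hpr) e) →
      ∀ (rr : ↥(G.neighborSet p)), (↑rr : V) = r →
        β ↑(θ' h' w') = ↑(θ (nadj e) rr)
  -- connection along a horizontal edge `z^p_e → z^q_f`
  conn_h_t : ∀ ⦃p q : V⦄ (hpq : H.Adj p q) (e : ↥(G.neighborSet p)), ¬ H.Adj p ↑e →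
      ∀ (h' : G'.Adj (z p e) (z q (θ (H.adj_sub hpq) e)))
        (w' : ↥(G'.neighborSet (z p e))), β ↑w' = ↑e →
        β ↑(θ' h' w') = ↑(θ (H.adj_sub hpq) e)
  conn_h_v : ∀ ⦃p q : V⦄ (hpq : H.Adj p q) (e : ↥(G.neighborSet p)), ¬ H.Adj p ↑e →
      ∀ (h' : G'.Adj (z p e) (z q (θ (H.adj_sub hpq) e)))
        (e'' : ↥(G.neighborSet p)), ¬ H.Adj p ↑e'' → (↑e'' : V) ≠ ↑e →
      ∀ (w' : ↥(G'.neighborSet (z p e))), (↑w' : V') = z p e'' →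
        (↑(θ' h' w') : V') = z q (θ (H.adj_sub hpq) e'')
  conn_h_h : ∀ ⦃p q : V⦄ (hpq : H.Adj p q) (e : ↥(G.neighborSet p)), ¬ H.Adj p ↑e →
      ∀ (h' : G'.Adj (z p e) (z q (θ (H.adj_sub hpq) e)))
        ⦃r : V⦄ (hpr : H.Adj p r)
        (w' : ↥(G'.neighborSet (z p e))), (↑w' : V') = z r (θ (H.adj_sub hpr) e) →
      ∀ (rr : ↥(G.neighborSet p)), (↑rr : V) = r →
      ∀ (s : V), s = ↑(θ (H.adj_sub hpq) rr) →
      ∀ (hqs : H.Adj q s),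
        (↑(θ' h' w') : V') = z s (θ (H.adj_sub hqs) (θ (H.adj_sub hpq) e))
  -- connection along a vertical edge `z^p_e → z^p_{e'}`
  conn_v_t : ∀ ⦃p : V⦄, p ∈ H.verts →
      ∀ (e e' : ↥(G.neighborSet p)), ¬ H.Adj p ↑e → ¬ H.Adj p ↑e' → (↑e : V) ≠ ↑e' →
      ∀ (h' : G'.Adj (z p e) (z p e')) (w' : ↥(G'.neighborSet (z p e))), β ↑w' = ↑e →
        β ↑(θ' h' w') = ↑e'
  conn_v_h : ∀ ⦃p : V⦄, p ∈ H.verts →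
      ∀ (e e' : ↥(G.neighborSet p)), ¬ H.Adj p ↑e → ¬ H.Adj p ↑e' → (↑e : V) ≠ ↑e' →
      ∀ (h' : G'.Adj (z p e) (z p e')) ⦃r : V⦄ (hpr : H.Adj p r)
        (w' : ↥(G'.neighborSet (z p e))), (↑w' : V') = z r (θ (H.adj_sub hpr) e) →
        (↑(θ' h' w') : V') = z r (θ (H.adj_sub hpr) e')
  conn_v_v : ∀ ⦃p : V⦄, p ∈ H.verts →
      ∀ (e e' e'' : ↥(G.neighborSet p)), ¬ H.Adj p ↑e → ¬ H.Adj p ↑e' → ¬ H.Adj p ↑e'' →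
        (↑e : V) ≠ ↑e' → (↑e'' : V) ≠ ↑e → (↑e'' : V) ≠ ↑e' →
      ∀ (h' : G'.Adj (z p e) (z p e')) (w' : ↥(G'.neighborSet (z p e))),
        (↑w' : V') = z p e'' → (↑(θ' h' w') : V') = z p e''
  -- compatibility system
  lam_ns : ∀ ⦃x' y' : V'⦄ (h' : G'.Adj x' y'), β x' ∉ H.verts →
      ∀ (h : G.Adj (β x') (β y')) (w' : ↥(G'.neighborSet x')) (w : ↥(G.neighborSet (β x'))),
        (↑w : V) = β ↑w' → lam' h' w' = lam h w
  lam_t_v : ∀ ⦃p : V⦄, p ∈ H.verts → ∀ (e : ↥(G.neighborSet p)), ¬ H.Adj p ↑e →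
      ∀ ⦃y' : V'⦄ (h' : G'.Adj (z p e) y'), β y' = ↑e →
      ∀ (e'' : ↥(G.neighborSet p)), ¬ H.Adj p ↑e'' → (↑e'' : V) ≠ ↑e →
      ∀ (w' : ↥(G'.neighborSet (z p e))), (↑w' : V') = z p e'' →
        lam' h' w' = lam (nadj e) e''
  lam_t_h : ∀ ⦃p : V⦄, p ∈ H.verts → ∀ (e : ↥(G.neighborSet p)), ¬ H.Adj p ↑e →
      ∀ ⦃y' : V'⦄ (h' : G'.Adj (z p e) y'), β y' = ↑e →
      ∀ ⦃r : V⦄ (hpr : H.Adj p r)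
        (w' : ↥(G'.neighborSet (z p e))), (↑w' : V') = z r (θ (H.adj_sub hpr) e) →
      ∀ (rr : ↥(G.neighborSet p)), (↑rr : V) = r →
        lam' h' w' = lam (nadj e) rr
  lam_h_t : ∀ ⦃p q : V⦄ (hpq : H.Adj p q) (e : ↥(G.neighborSet p)), ¬ H.Adj p ↑e →
      ∀ (h' : G'.Adj (z p e) (z q (θ (H.adj_sub hpq) e)))
        (w' : ↥(G'.neighborSet (z p e))), β ↑w' = ↑e → lam' h' w' = 1
  lam_h_v : ∀ ⦃p q : V⦄ (hpq : H.Adj p q) (e : ↥(G.neighborSet p)), ¬ H.Adj p ↑e →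
      ∀ (h' : G'.Adj (z p e) (z q (θ (H.adj_sub hpq) e)))
        (e'' : ↥(G.neighborSet p)), ¬ H.Adj p ↑e'' → (↑e'' : V) ≠ ↑e →
      ∀ (w' : ↥(G'.neighborSet (z p e))), (↑w' : V') = z p e'' →
        lam' h' w' = lam (H.adj_sub hpq) e''
  lam_h_h : ∀ ⦃p q : V⦄ (hpq : H.Adj p q) (e : ↥(G.neighborSet p)), ¬ H.Adj p ↑e →
      ∀ (h' : G'.Adj (z p e) (z q (θ (H.adj_sub hpq) e)))
        ⦃r : V⦄ (hpr : H.Adj p r)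
        (w' : ↥(G'.neighborSet (z p e))), (↑w' : V') = z r (θ (H.adj_sub hpr) e) →
      ∀ (rr : ↥(G.neighborSet p)), (↑rr : V) = r →
        lam' h' w' = lam (H.adj_sub hpq) rr
  lam_v : ∀ ⦃p : V⦄, p ∈ H.verts →
      ∀ (e e' : ↥(G.neighborSet p)), ¬ H.Adj p ↑e → ¬ H.Adj p ↑e' → (↑e : V) ≠ ↑e' →
      ∀ (h' : G'.Adj (z p e) (z p e')) (w' : ↥(G'.neighborSet (z p e))),
        lam' h' w' = 1

end BlowUp
section Misc

variable {W : Type v} [AddCommGroup W] [Module ℝ W]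

/-- The induced subgraph of `G` on a set of vertices. -/
def inducedSub (G : SimpleGraph V) (s : Set V) : G.Subgraph where
  verts := s
  Adj p q := G.Adj p q ∧ p ∈ s ∧ q ∈ s
  adj_sub := fun h => h.1
  edge_vert := fun h => h.2.1
  symm := ⟨fun _ _ h => ⟨h.1.symm, h.2.2, h.2.1⟩⟩

/-- The graph of the direct product of a graph with the interval. -/
def prodIntervalGraph (G : SimpleGraph V) : SimpleGraph (V × Bool) where
  Adj x y := (x.2 = y.2 ∧ G.Adj x.1 y.1) ∨ (x.1 = y.1 ∧ x.2 ≠ y.2)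
  symm := by
    constructor
    rintro x y (⟨h1, h2⟩ | ⟨h1, h2⟩)
    · exact Or.inl ⟨h1.symm, h2.symm⟩
    · exact Or.inr ⟨h1.symm, Ne.symm h2⟩
  loopless := by
    constructor
    rintro x (⟨_, h⟩ | ⟨_, h⟩)
    · exact G.loopless.irrefl _ h
    · exact h rfl

/-- Specification of the direct product of the generalized 1-skeleton `(G, θ, λ, α)` in `W`
with the interval 1-skeleton `(I, α_I, θ_I, λ_I)` in `ℝ`: the result is the quadruple
`(prodIntervalGraph G, θ', λ', α')` in `W × ℝ`. -/
structure IsIntervalProduct (G : SimpleGraph V) (θ : GraphConn G) (lam : CompatSys G)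
    (α : AxialFn G W) (θ' : GraphConn (prodIntervalGraph G))
    (lam' : CompatSys (prodIntervalGraph G))
    (α' : AxialFn (prodIntervalGraph G) (W × ℝ)) : Prop where
  conn' : IsConnection (prodIntervalGraph G) θ'
  compat' : IsCompatSystem (prodIntervalGraph G) θ' lam'
  alpha_hor : ∀ ⦃x y : V × Bool⦄ (h' : (prodIntervalGraph G).Adj x y) (h : G.Adj x.1 y.1),
      x.2 = y.2 → α' h' = (α h, 0)
  alpha_up : ∀ ⦃x y : V × Bool⦄ (h' : (prodIntervalGraph G).Adj x y),
      x.1 = y.1 → x.2 = false → α' h' = (0, 1)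
  alpha_down : ∀ ⦃x y : V × Bool⦄ (h' : (prodIntervalGraph G).Adj x y),
      x.1 = y.1 → x.2 = true → α' h' = (0, -1)
  conn_hor_hor : ∀ ⦃x y : V × Bool⦄ (h' : (prodIntervalGraph G).Adj x y) (h : G.Adj x.1 y.1),
      x.2 = y.2 → ∀ (w' : ↥((prodIntervalGraph G).neighborSet x)) (w : ↥(G.neighborSet x.1)),
        (↑w' : V × Bool) = (↑w, x.2) → (↑(θ' h' w') : V × Bool) = (↑(θ h w), x.2)
  conn_hor_ver : ∀ ⦃x y : V × Bool⦄ (h' : (prodIntervalGraph G).Adj x y),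
      x.2 = y.2 → ∀ (w' : ↥((prodIntervalGraph G).neighborSet x)),
        (↑w' : V × Bool) = (x.1, !x.2) → (↑(θ' h' w') : V × Bool) = (y.1, !x.2)
  conn_ver_hor : ∀ ⦃x y : V × Bool⦄ (h' : (prodIntervalGraph G).Adj x y),
      x.1 = y.1 → ∀ (w' : ↥((prodIntervalGraph G).neighborSet x)) (w : ↥(G.neighborSet x.1)),
        (↑w' : V × Bool) = (↑w, x.2) → (↑(θ' h' w') : V × Bool) = (↑w, y.2)
  lam_hor_hor : ∀ ⦃x y : V × Bool⦄ (h' : (prodIntervalGraph G).Adj x y) (h : G.Adj x.1 y.1),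
      x.2 = y.2 → ∀ (w' : ↥((prodIntervalGraph G).neighborSet x)) (w : ↥(G.neighborSet x.1)),
        (↑w' : V × Bool) = (↑w, x.2) → lam' h' w' = lam h w
  lam_hor_ver : ∀ ⦃x y : V × Bool⦄ (h' : (prodIntervalGraph G).Adj x y),
      x.2 = y.2 → ∀ (w' : ↥((prodIntervalGraph G).neighborSet x)),
        (↑w' : V × Bool) = (x.1, !x.2) → lam' h' w' = 1
  lam_ver : ∀ ⦃x y : V × Bool⦄ (h' : (prodIntervalGraph G).Adj x y),
      x.1 = y.1 → ∀ (w' : ↥((prodIntervalGraph G).neighborSet x)), lam' h' w' = 1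

end Misc

section Polytope

/-- `(G, A)` is the vertex–edge graph of a simple `d`-polytope `S ⊆ ℝ^d`, with
`A(uv) = v - u` along each oriented edge: `g` identifies the vertices of `G` with the
extreme points of `S = convexHull F`, `S` is full-dimensional, adjacency corresponds to
exposed one-dimensional faces (segments), and `A` is given by differences of vertices. -/
def IsPolytopeSkeleton {d : ℕ} (G : SimpleGraph V) (A : AxialFn G (Fin d → ℝ)) : Prop :=
  ∃ (F : Finset (Fin d → ℝ)) (g : V → (Fin d → ℝ)),
    affineSpan ℝ (convexHull ℝ (F : Set (Fin d → ℝ))) = ⊤ ∧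
    Function.Injective g ∧
    Set.range g = Set.extremePoints ℝ (convexHull ℝ (F : Set (Fin d → ℝ))) ∧
    (∀ p q : V, G.Adj p q ↔ (g p ≠ g q ∧
        IsExposed ℝ (convexHull ℝ (F : Set (Fin d → ℝ))) (segment ℝ (g p) (g q)))) ∧
    (∀ ⦃p q : V⦄ (h : G.Adj p q), A h = g q - g p)

end Polytope

section AuxProof

variable {V : Type u} {W : Type v} [AddCommGroup W] [Module ℝ W]
variable {G : SimpleGraph V} {θ : GraphConn G} {lam : CompatSys G}

/-- Oriented edges of `G` at `p` that lie in `H`. -/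
def HSet {G : SimpleGraph V} (H : G.Subgraph) (p : V) : Set ↥(G.neighborSet p) :=
  {e | H.Adj p ↑e}

/-- The span of axial vectors of `H`-edges at `p`. -/
def Pl {G : SimpleGraph V} (α : AxialFn G W) (H : G.Subgraph) (p : V) :
    Submodule ℝ W :=
  Submodule.span ℝ ((fun e : ↥(G.neighborSet p) => α (nadj e)) '' HSet H p)

lemma hset_ncard {H : G.Subgraph}
    (hval : ∀ p ∈ H.verts, (H.neighborSet p).ncard = 2) {p : V} (hp : p ∈ H.verts) :
    (HSet H p).ncard = 2 := by
  have himg : Subtype.val '' HSet H p = H.neighborSet p := by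
    ext q
    constructor
    · rintro ⟨e, he, rfl⟩; exact he
    · intro hq; exact ⟨⟨q, H.adj_sub hq⟩, hq, rfl⟩
  rw [← hval p hp, ← himg, Set.ncard_image_of_injective _ Subtype.val_injective]

lemma normal_stable [Fintype V] {H : G.Subgraph} (hsub : IsSubskeleton θ H)
    (hval : ∀ p ∈ H.verts, (H.neighborSet p).ncard = 2)
    {p q : V} (h : H.Adj p q) (e : ↥(G.neighborSet p)) (he : ¬ H.Adj p ↑e) :
    ¬ H.Adj q ↑(θ (H.adj_sub h) e) := by
  intro hc
  have hsubset : (θ (H.adj_sub h)) '' HSet H p ⊆ HSet H q := by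
    rintro _ ⟨e', he', rfl⟩
    exact hsub.geodesic h e' he'
  have h1 : ((θ (H.adj_sub h)) '' HSet H p).ncard = 2 := by
    rw [Set.ncard_image_of_injective _ (θ (H.adj_sub h)).injective]
    exact hset_ncard hval (H.edge_vert h)
  have heq : (θ (H.adj_sub h)) '' HSet H p = HSet H q :=
    Set.eq_of_subset_of_ncard_le hsubset
      (by rw [h1, hset_ncard hval (H.edge_vert h.symm)]) (Set.toFinite _)
  have hc' : θ (H.adj_sub h) e ∈ HSet H q := hc
  rw [← heq] at hc'
  obtain ⟨e', he', heq'⟩ := hc'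
  exact he ((θ (H.adj_sub h)).injective heq' ▸ he')

lemma pl_mono {α : AxialFn G W} {H : G.Subgraph}
    (hsk : IsOneSkeleton G θ lam α) (hsub : IsSubskeleton θ H)
    {p q : V} (h : H.Adj p q) : Pl α H p ≤ Pl α H q := by
  rw [Pl, Submodule.span_le]
  rintro _ ⟨e, he, rfl⟩
  by_cases hq : (↑e : V) = q
  · obtain ⟨ev, hadj⟩ := e
    dsimp only at hq
    subst hq
    show α hadj ∈ Pl α H ev
    have h1 : α hadj.symm ∈ Pl α H ev :=
      Submodule.subset_span ⟨⟨p, hadj.symm⟩, h.symm, rfl⟩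
    have h2 := Submodule.neg_mem _ h1
    rw [hsk.2.1 hadj, neg_neg] at h2
    exact h2
  · obtain ⟨c, hc⟩ := hsk.1.axial.2 (H.adj_sub h) e hq
    have h1 : α (nadj (θ (H.adj_sub h) e)) ∈ Pl α H q :=
      Submodule.subset_span ⟨_, hsub.geodesic h e he, rfl⟩
    have h2 : α (H.adj_sub h) ∈ Pl α H q := by
      have h3 : α (H.adj_sub h).symm ∈ Pl α H q :=
        Submodule.subset_span ⟨⟨p, (H.adj_sub h).symm⟩, h.symm, rfl⟩
      have h4 := Submodule.neg_mem _ h3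
      rw [hsk.2.1 (H.adj_sub h), neg_neg] at h4
      exact h4
    have hA : α (nadj e) = c • α (H.adj_sub h)
        + lam (H.adj_sub h) e • α (nadj (θ (H.adj_sub h) e)) := by
      rw [sub_eq_iff_eq_add] at hc
      exact hc
    show α (nadj e) ∈ Pl α H q
    rw [hA]
    exact Submodule.add_mem _ (Submodule.smul_mem _ _ h2) (Submodule.smul_mem _ _ h1)

lemma key_transport [Fintype V] {α : AxialFn G W} {H : G.Subgraph}
    (hsk : IsOneSkeleton G θ lam α) (hsub : IsSubskeleton θ H)
    (hval : ∀ p ∈ H.verts, (H.neighborSet p).ncard = 2)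
    {p q : V} (w : G.Walk p q) :
    WalkIn H w → ∀ e : ↥(G.neighborSet p), ¬ H.Adj p ↑e →
      ¬ H.Adj q ↑(transport θ w e) ∧
      α (nadj e) - transNum θ lam w e • α (nadj (transport θ w e)) ∈ Pl α H p := by
  induction w with
  | nil =>
    intro _ e he
    refine ⟨he, ?_⟩
    simp only [transport, transNum, one_smul, sub_self]
    exact Submodule.zero_mem _
  | @cons a b c hab w ih =>
    intro hW e he
    have hH : H.Adj a b := hW ⟨(a, b), hab⟩ (by
      rw [SimpleGraph.Walk.darts_cons]; exact List.mem_cons_self)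
    have hW' : WalkIn H w := fun d hd => hW d (by
      rw [SimpleGraph.Walk.darts_cons]; exact List.mem_cons_of_mem _ hd)
    have he2 : ¬ H.Adj b ↑(θ hab e) := normal_stable hsub hval hH e he
    obtain ⟨hn, hm⟩ := ih hW' (θ hab e) he2
    have hne : (↑e : V) ≠ b := by
      intro hb
      exact he (by rw [hb]; exact hH)
    obtain ⟨cc, hc⟩ := hsk.1.axial.2 hab e hne
    refine ⟨hn, ?_⟩
    simp only [transport, transNum]
    have hstep : α (nadj e)
        - (lam hab e * transNum θ lam w (θ hab e)) • α (nadj (transport θ w (θ hab e)))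
        = cc • α hab + lam hab e •
          (α (nadj (θ hab e)) - transNum θ lam w (θ hab e) • α (nadj (transport θ w (θ hab e)))) := by
      rw [← hc]
      module
    rw [hstep]
    refine Submodule.add_mem _ ?_ ?_
    · exact Submodule.smul_mem _ _ (Submodule.subset_span ⟨⟨b, hab⟩, hH, rfl⟩)
    · exact Submodule.smul_mem _ _ (pl_mono hsk hsub hH.symm hm)

end AuxProof

/-- In a 3-independent 1-skeleton, every 2-valent subskeleton is level. -/
theorem every_two_valent_subskeleton_of_three_independent_is_level
    {V : Type u} [Fintype V] {n : ℕ}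
    (G : SimpleGraph V) (θ : GraphConn G) (lam : CompatSys G)
    (α : AxialFn G (Fin n → ℝ))
    (hsk : IsOneSkeleton G θ lam α) (h3 : kIndep G α 3) :
    ∀ H : G.Subgraph, IsSubskeleton θ H →
      (∀ p ∈ H.verts, (H.neighborSet p).ncard = 2) →
      LevelSub θ lam H := by
  classical
  intro H hsub hval p w hW e he htr
  cases w with
  | nil => simp [transNum]
  | @cons _ b _ hab w' =>
    have hH : H.Adj p b := hW ⟨(p, b), hab⟩ (by
      rw [SimpleGraph.Walk.darts_cons]; exact List.mem_cons_self)
    have hp : p ∈ H.verts := H.edge_vert hH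
    obtain ⟨-, M⟩ := key_transport hsk hsub hval (SimpleGraph.Walk.cons hab w') hW e he
    rw [htr] at M
    set t := transNum θ lam (SimpleGraph.Walk.cons hab w') e with ht
    have M' : (1 - t) • α (nadj e) ∈ Pl α H p := by
      rw [sub_smul, one_smul]
      exact M
    obtain ⟨e1, e2, hne12, hS⟩ := Set.ncard_eq_two.mp (hset_ncard hval hp)
    have hPl : Pl α H p
        = Submodule.span ℝ {α (nadj e1), α (nadj e2)} := by
      rw [Pl, hS, Set.image_pair]
    rw [hPl] at M'
    obtain ⟨m, m', hmn⟩ := Submodule.mem_span_pair.mp M'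
    have m1 : H.Adj p ↑e1 := by
      have : e1 ∈ HSet H p := by rw [hS]; exact Set.mem_insert _ _
      exact this
    have m2 : H.Adj p ↑e2 := by
      have : e2 ∈ HSet H p := by
        rw [hS]; exact Set.mem_insert_iff.mpr (Or.inr rfl)
      exact this
    have hne1 : e ≠ e1 := by rintro rfl; exact he m1
    have hne2 : e ≠ e2 := by rintro rfl; exact he m2
    have hcard : ({e, e1, e2} : Finset ↥(G.neighborSet p)).card = 3 :=
      Finset.card_eq_three.mpr ⟨e, e1, e2, hne1, hne2, hne12, rfl⟩
    have li := h3 p {e, e1, e2} hcard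
    have hme : e ∈ (↑({e, e1, e2} : Finset ↥(G.neighborSet p)) : Set _) := by simp
    have hme1 : e1 ∈ (↑({e, e1, e2} : Finset ↥(G.neighborSet p)) : Set _) := by simp
    have hme2 : e2 ∈ (↑({e, e1, e2} : Finset ↥(G.neighborSet p)) : Set _) := by simp
    set g : Fin 3 → ↥(↑({e, e1, e2} : Finset ↥(G.neighborSet p)) : Set _) :=
      ![⟨e, hme⟩, ⟨e1, hme1⟩, ⟨e2, hme2⟩] with hg
    have ginj : Function.Injective g := by
      intro i j hij
      rw [hg] at hij
      fin_cases i <;> fin_cases j <;> simp_all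
    have li3 := li.comp g ginj
    have hfin : (![1 - t, -m, -m'] : Fin 3 → ℝ) 0 = 0 := by
      refine Fintype.linearIndependent_iff.mp li3 _ ?_ 0
      rw [Fin.sum_univ_three]
      simp only [hg, Function.comp_apply, Matrix.cons_val_zero, Matrix.cons_val_one,
        Matrix.head_cons, Matrix.cons_val_two, Matrix.tail_cons, Subtype.coe_mk]
      rw [← hmn]
      change m • α (nadj e1) + m' • α (nadj e2) + -m • α (nadj e1) + -m' • α (nadj e2) = 0
      module
    simp only [Matrix.cons_val_zero] at hfin
    have : t = 1 := by linarith
    exact this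
end

section
/- Let (Γ, α, θ, λ) be a d-valent 1-skeleton in ℝ^d whose axial function is effective (equivalently, d-independent). Then every 2-valent subskeleton of (Γ, α, θ, λ) is level and has trivial normal holonomy. -/
open SimpleGraph

universe u u' v

variable {V : Type u}

section Polytope

section ProofAux

variable {V : Type u} [Fintype V] {d : ℕ}
variable (G : SimpleGraph V) (θ : GraphConn G) (lam : CompatSys G) (α : AxialFn G (Fin d → ℝ))

/-- The set of oriented `H`-edges at `p`, as a subset of the oriented `G`-edges at `p`. -/
def hSet (H : G.Subgraph) (p : V) : Set ↥(G.neighborSet p) := {f | H.Adj p ↑f}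

/-- The span of the axial vectors of the `H`-edges at `p`. -/
def pSpan (H : G.Subgraph) (p : V) : Submodule ℝ (Fin d → ℝ) :=
  Submodule.span ℝ ((fun e : ↥(G.neighborSet p) => α (nadj e)) '' hSet G H p)

lemma hSet_ncard (H : G.Subgraph) (p : V) :
    (hSet G H p).ncard = (H.neighborSet p).ncard := by
  have himg : Subtype.val '' hSet G H p = H.neighborSet p := by
    ext v
    constructor
    · rintro ⟨f, hf, rfl⟩; exact hf
    · intro hv; exact ⟨⟨v, H.adj_sub hv⟩, hv, rfl⟩
  rw [← himg, Set.ncard_image_of_injective _ Subtype.val_injective]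

lemma hSet_image {H : G.Subgraph} (hsub : IsSubskeleton θ H)
    (h2v : ∀ p ∈ H.verts, (H.neighborSet p).ncard = 2)
    {p q : V} (h : G.Adj p q) (hH : H.Adj p q) :
    (θ h) '' hSet G H p = hSet G H q := by
  apply Set.eq_of_subset_of_ncard_le
  · rintro _ ⟨f, hf, rfl⟩
    exact hsub.geodesic hH f hf
  · rw [Set.ncard_image_of_injective _ (θ h).injective, hSet_ncard, hSet_ncard,
      h2v p (H.edge_vert hH), h2v q (H.edge_vert hH.symm)]
  · exact Set.toFinite _

lemma pSpan_step (hsk : IsOneSkeleton G θ lam α) {H : G.Subgraph} (hsub : IsSubskeleton θ H)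
    (h2v : ∀ p ∈ H.verts, (H.neighborSet p).ncard = 2)
    {p q : V} (h : G.Adj p q) (hH : H.Adj p q) :
    pSpan G α H q ≤ pSpan G α H p := by
  have hαh : α h ∈ pSpan G α H p :=
    Submodule.subset_span ⟨⟨q, h⟩, hH, rfl⟩
  rw [pSpan, Submodule.span_le]
  rintro x ⟨f', hf', rfl⟩
  rw [← hSet_image G θ hsub h2v h hH] at hf'
  obtain ⟨f, hf, rfl⟩ := hf'
  show α (nadj (θ h f)) ∈ pSpan G α H p
  by_cases hfq : (↑f : V) = q
  · have hfe : f = (⟨q, h⟩ : ↥(G.neighborSet p)) := Subtype.ext hfq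
    subst hfe
    have hθ : θ h (⟨q, h⟩ : ↥(G.neighborSet p)) = ⟨p, h.symm⟩ := hsk.1.conn.1 h
    rw [hθ]
    rw [show α (nadj (⟨p, h.symm⟩ : ↥(G.neighborSet q))) = -α h from hsk.2.1 h]
    exact neg_mem hαh
  · obtain ⟨c, hc⟩ := hsk.1.axial.2 h f hfq
    have hlam : lam h f ≠ 0 := ne_of_gt (hsk.1.compat.1 h f)
    have h1 : lam h f • α (nadj (θ h f)) = α (nadj f) - c • α h := by
      rw [← hc]; abel
    have h2 : lam h f • α (nadj (θ h f)) ∈ pSpan G α H p := by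
      rw [h1]
      exact sub_mem (Submodule.subset_span ⟨f, hf, rfl⟩) (Submodule.smul_mem _ c hαh)
    have h3 := Submodule.smul_mem _ (lam h f)⁻¹ h2
    rwa [inv_smul_smul₀ hlam] at h3

lemma walk_ind (hsk : IsOneSkeleton G θ lam α) {H : G.Subgraph} (hsub : IsSubskeleton θ H)
    (h2v : ∀ p ∈ H.verts, (H.neighborSet p).ncard = 2) :
    ∀ {p q : V} (w : G.Walk p q), WalkIn H w →
      pSpan G α H q ≤ pSpan G α H p ∧
      ∀ e : ↥(G.neighborSet p), e ∉ hSet G H p →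
        transport θ w e ∉ hSet G H q ∧ 0 < transNum θ lam w e ∧
        α (nadj e) - transNum θ lam w e • α (nadj (transport θ w e)) ∈ pSpan G α H p := by
  intro p q w
  induction w with
  | nil =>
    intro _
    refine ⟨le_rfl, fun e he => ⟨he, one_pos, ?_⟩⟩
    rw [show transNum θ lam SimpleGraph.Walk.nil e = 1 from rfl,
      show transport θ SimpleGraph.Walk.nil e = e from rfl, one_smul, sub_self]
    exact Submodule.zero_mem _
  | @cons p r q h w ih =>
    intro hw
    have hpr : H.Adj p r := by
      have := hw ⟨(p, r), h⟩ (by rw [SimpleGraph.Walk.darts_cons]; exact List.mem_cons_self)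
      exact this
    have hw' : WalkIn H w := fun dd hd => hw dd (by
      rw [SimpleGraph.Walk.darts_cons]; exact List.mem_cons_of_mem _ hd)
    obtain ⟨ihle, ihe⟩ := ih hw'
    have hPle : pSpan G α H r ≤ pSpan G α H p :=
      pSpan_step G θ lam α hsk hsub h2v h hpr
    refine ⟨ihle.trans hPle, fun e he => ?_⟩
    have hαh : α h ∈ pSpan G α H p :=
      Submodule.subset_span ⟨⟨r, h⟩, hpr, rfl⟩
    have he' : θ h e ∉ hSet G H r := by
      intro hmem
      rw [← hSet_image G θ hsub h2v h hpr] at hmem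
      obtain ⟨f, hf, hef⟩ := hmem
      exact he (((θ h).injective hef) ▸ hf)
    obtain ⟨hT, hpos, hmem⟩ := ihe (θ h e) he'
    have heq : (↑e : V) ≠ r := fun hh => he (by rw [hSet, Set.mem_setOf_eq, hh]; exact hpr)
    obtain ⟨c, hc⟩ := hsk.1.axial.2 h e heq
    have hlampos : 0 < lam h e := hsk.1.compat.1 h e
    refine ⟨hT, ?_, ?_⟩
    · show 0 < lam h e * transNum θ lam w (θ h e)
      exact mul_pos hlampos hpos
    · show α (nadj e) - (lam h e * transNum θ lam w (θ h e)) •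
        α (nadj (transport θ w (θ h e))) ∈ pSpan G α H p
      have key : α (nadj e) - (lam h e * transNum θ lam w (θ h e)) •
          α (nadj (transport θ w (θ h e)))
          = (α (nadj e) - lam h e • α (nadj (θ h e)))
            + lam h e • (α (nadj (θ h e)) - transNum θ lam w (θ h e) •
              α (nadj (transport θ w (θ h e)))) := by
        rw [smul_sub, smul_smul]; abel
      rw [key, hc]
      exact add_mem (Submodule.smul_mem _ c hαh) (Submodule.smul_mem _ _ (hPle hmem))

lemma final_step (hsk : IsOneSkeleton G θ lam α) (hd : Valency G d)
    (heff : EffectiveAxial G α) (H : G.Subgraph) {p : V}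
    (e e' : ↥(G.neighborSet p)) (he : e ∉ hSet G H p) (he' : e' ∉ hSet G H p)
    {m : ℝ} (hm : 0 < m)
    (hmem : α (nadj e) - m • α (nadj e') ∈ pSpan G α H p) : e' = e ∧ m = 1 := by
  haveI : Fintype ↥(G.neighborSet p) := Fintype.ofFinite _
  set v : ↥(G.neighborSet p) → (Fin d → ℝ) := fun f => α (nadj f) with hv
  have hcard : Fintype.card ↥(G.neighborSet p) = d := by
    rw [← Set.toFinset_card, ← Set.ncard_eq_toFinset_card', hd p]
  have li : LinearIndependent ℝ v :=
    linearIndependent_of_top_le_span_of_card_eq_finrank (le_of_eq (heff p).symm)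
      (by rw [hcard, Module.finrank_fin_fun])
  have hx1 : v e - m • v e' ∈ Submodule.span ℝ (v '' {e, e'}) :=
    sub_mem (Submodule.subset_span ⟨e, by simp, rfl⟩)
      (Submodule.smul_mem _ _ (Submodule.subset_span ⟨e', by simp, rfl⟩))
  have hdisj : Disjoint ({e, e'} : Set ↥(G.neighborSet p)) (hSet G H p) := by
    rw [Set.disjoint_left]
    intro f hf hfS
    simp only [Set.mem_insert_iff, Set.mem_singleton_iff] at hf
    rcases hf with rfl | rfl
    · exact he hfS
    · exact he' hfS
  have hz : v e - m • v e' = 0 :=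
    Submodule.disjoint_def.mp (li.disjoint_span_image hdisj) _ hx1 hmem
  have heq : v e = m • v e' := by rwa [sub_eq_zero] at hz
  have hee : e' = e := by
    by_contra hne
    have d2 := li.disjoint_span_image (s := {e}) (t := {e'})
      (by simp [Ne.symm hne])
    have hz2 : v e = 0 := by
      refine Submodule.disjoint_def.mp d2 _ (Submodule.subset_span (by simp)) ?_
      rw [heq]
      exact Submodule.smul_mem _ _ (Submodule.subset_span (by simp))
    exact li.ne_zero e hz2
  refine ⟨hee, ?_⟩
  rw [hee] at hz
  have hz3 : (1 - m) • v e = 0 := by rw [sub_smul, one_smul]; exact hz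
  rcases smul_eq_zero.mp hz3 with hcase | hcase
  · linarith
  · exact absurd hcase (li.ne_zero e)

end ProofAux

/-- In a `d`-valent effective 1-skeleton in `ℝ^d`, every 2-valent subskeleton
is level and has trivial normal holonomy. -/
theorem two_valent_subskeleta_of_effective_skeleton_level_and_trivial
    {V : Type u} [Fintype V] {d : ℕ}
    (G : SimpleGraph V) (θ : GraphConn G) (lam : CompatSys G)
    (α : AxialFn G (Fin d → ℝ))
    (hsk : IsOneSkeleton G θ lam α) (hd : Valency G d) (heff : EffectiveAxial G α) :
    ∀ H : G.Subgraph, IsSubskeleton θ H →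
      (∀ p ∈ H.verts, (H.neighborSet p).ncard = 2) →
      LevelSub θ lam H ∧ TrivialNormalHolonomy θ H := by
  intro H hsub h2v
  have key : ∀ (p : V) (w : G.Walk p p), WalkIn H w → ∀ e : ↥(G.neighborSet p),
      ¬ H.Adj p ↑e → transport θ w e = e ∧ transNum θ lam w e = 1 := by
    intro p w hw e he
    obtain ⟨_, h2⟩ := walk_ind G θ lam α hsk hsub h2v w hw
    obtain ⟨hT, hpos, hmem⟩ := h2 e he
    exact final_step G θ lam α hsk hd heff H e (transport θ w e) he hT hpos hmem
  constructor
  · intro p w hw e he _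
    exact (key p w hw e he).2
  · intro p w hw e he
    exact (key p w hw e he).1
end Polytope
end

section
/- Let (Γ, α, θ) be a 1-skeleton in ℝ^n and let H ⊆ ℝ^n be a linear subspace. Then every connected component Γ_H of the subgraph of Γ whose edges are those e with α(e) ∈ H is totally geodesic — i.e. for every oriented edge e of Γ_H, θ_e maps the oriented edges of Γ_H at i(e) onto the oriented edges of Γ_H at t(e) — and Γ_H has constant valency; in particular Γ_H with the restricted data is a subskeleton. -/
open SimpleGraph

universe u u' v

variable {V : Type u}

section AuxProof

variable {V : Type u} {n : ℕ} {G : SimpleGraph V} {θ : GraphConn G} {lam : CompatSys G}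
  {α : AxialFn G (Fin n → ℝ)} {Hs : Submodule ℝ (Fin n → ℝ)}

lemma aux_key_mem (hsk : IsOneSkeleton G θ lam α) {p q : V} (h : G.Adj p q)
    (hα : α h ∈ Hs) (e : ↥(G.neighborSet p)) (he : α (nadj e) ∈ Hs) :
    α (nadj (θ h e)) ∈ Hs := by
  by_cases hq : (↑e : V) = q
  · have he2 : e = (⟨q, hq ▸ e.2⟩ : ↥(G.neighborSet p)) := Subtype.ext hq
    rw [he2, hsk.1.conn.1 h]
    show α h.symm ∈ Hs
    rw [hsk.2.1 h]
    exact Hs.neg_mem hα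
  · obtain ⟨c, hc⟩ := hsk.1.axial.2 h e hq
    have hpos := hsk.1.compat.1 h e
    have h2 : lam h e • α (nadj (θ h e)) = α (nadj e) - c • α h := by
      rw [← hc]; abel
    have h3 : α (nadj (θ h e)) = (lam h e)⁻¹ • (α (nadj e) - c • α h) := by
      rw [← h2, inv_smul_smul₀ (ne_of_gt hpos)]
    rw [h3]
    exact Hs.smul_mem _ (Hs.sub_mem he (Hs.smul_mem _ hα))

lemma aux_slice_adj_step (hsk : IsOneSkeleton G θ lam α) {p q : V} (h : G.Adj p q)
    (hα : α h ∈ Hs) (e : ↥(G.neighborSet p)) (he : α (nadj e) ∈ Hs) :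
    (sliceGraph G α Hs).Adj q ↑(θ h e) := by
  refine ⟨nadj (θ h e), aux_key_mem hsk h hα e he, ?_⟩
  rw [hsk.2.1 (nadj (θ h e))]
  exact Hs.neg_mem (aux_key_mem hsk h hα e he)

lemma aux_slice_ncard_eq (hsk : IsOneSkeleton G θ lam α) {p q : V} (h : G.Adj p q)
    (hα : α h ∈ Hs) (hα' : α h.symm ∈ Hs) :
    ((sliceGraph G α Hs).neighborSet p).ncard
      = ((sliceGraph G α Hs).neighborSet q).ncard := by
  rw [← Nat.card_coe_set_eq, ← Nat.card_coe_set_eq]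
  have hconn2 := hsk.1.conn.2 h
  refine Nat.card_congr (Equiv.ofBijective
    (fun x => ⟨↑(θ h ⟨↑x, x.2.choose⟩),
      aux_slice_adj_step hsk h hα ⟨↑x, x.2.choose⟩ x.2.choose_spec.1⟩) ⟨?_, ?_⟩)
  · intro x x' hxx'
    rw [Subtype.ext_iff] at hxx' ⊢
    have h2 : θ h ⟨↑x, x.2.choose⟩ = θ h ⟨↑x', x'.2.choose⟩ := Subtype.ext hxx'
    have h4 : (↑(⟨↑x, x.2.choose⟩ : ↥(G.neighborSet p)) : V)
        = ↑(⟨↑x', x'.2.choose⟩ : ↥(G.neighborSet p)) :=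
      congrArg Subtype.val ((θ h).injective h2)
    exact h4
  · intro y
    refine ⟨⟨↑(θ h.symm ⟨↑y, y.2.choose⟩),
      aux_slice_adj_step hsk h.symm hα' ⟨↑y, y.2.choose⟩ y.2.choose_spec.1⟩, ?_⟩
    apply Subtype.ext
    show (↑(θ h (θ h.symm ⟨↑y, y.2.choose⟩)) : V) = ↑y
    rw [hconn2, Equiv.apply_symm_apply]

lemma aux_slice_ncard_reach (hsk : IsOneSkeleton G θ lam α) :
    ∀ {p q : V}, (sliceGraph G α Hs).Walk p q →
    ((sliceGraph G α Hs).neighborSet p).ncard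
      = ((sliceGraph G α Hs).neighborSet q).ncard
  | _, _, SimpleGraph.Walk.nil => rfl
  | _, _, SimpleGraph.Walk.cons hadj w =>
      (aux_slice_ncard_eq hsk hadj.choose hadj.choose_spec.1 hadj.choose_spec.2).trans
        (aux_slice_ncard_reach hsk w)

lemma aux_lift_walk {v : V} :
    ∀ {p q : V} (w : (sliceGraph G α Hs).Walk p q)
      (hp : (sliceGraph G α Hs).Reachable v p),
    (sliceComponent G α Hs v).coe.Reachable ⟨p, hp⟩ ⟨q, hp.trans w.reachable⟩
  | _, _, SimpleGraph.Walk.nil, hp => Reachable.refl _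
  | p, q, SimpleGraph.Walk.cons hadj w, hp => by
      have hb := hp.trans hadj.reachable
      have hA : (sliceComponent G α Hs v).coe.Adj ⟨p, hp⟩ ⟨_, hb⟩ := ⟨hadj, hp, hb⟩
      exact hA.reachable.trans (aux_lift_walk w hb)

end AuxProof

/-- Every connected component of the subgraph of a 1-skeleton whose edges have
axial vectors in a subspace `Hs` is totally geodesic with constant valency — in particular a
subskeleton (`IsSubskeleton` packages connectivity, constant valency and total geodesy). -/
theorem slice_components_are_subskeleta
    {V : Type u} [Fintype V] {n : ℕ}
    (G : SimpleGraph V) (θ : GraphConn G) (lam : CompatSys G)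
    (α : AxialFn G (Fin n → ℝ))
    (hsk : IsOneSkeleton G θ lam α) :
    ∀ (Hs : Submodule ℝ (Fin n → ℝ)) (v : V),
      (∀ ⦃p q : V⦄ (h : (sliceComponent G α Hs v).Adj p q) (e : ↥(G.neighborSet p)),
        (sliceComponent G α Hs v).Adj p ↑e →
        (sliceComponent G α Hs v).Adj q ↑(θ ((sliceComponent G α Hs v).adj_sub h) e)) ∧
      (∃ k : ℕ, ∀ p ∈ (sliceComponent G α Hs v).verts,
        ((sliceComponent G α Hs v).neighborSet p).ncard = k) ∧
      IsSubskeleton θ (sliceComponent G α Hs v) := by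
  intro Hs v
  set H := sliceComponent G α Hs v with hHdef
  have geo : ∀ ⦃p q : V⦄ (h : H.Adj p q) (e : ↥(G.neighborSet p)),
      H.Adj p ↑e → H.Adj q ↑(θ (H.adj_sub h) e) := by
    intro p q h e he
    have hG : G.Adj p q := H.adj_sub h
    have h1 : α hG ∈ Hs := h.1.choose_spec.1
    have he1 : α (nadj e) ∈ Hs := he.1.choose_spec.1
    have hs := aux_slice_adj_step hsk hG h1 e he1
    exact ⟨hs, h.2.2, h.2.2.trans hs.reachable⟩
  have hval : ∀ p ∈ H.verts,
      (H.neighborSet p).ncard = ((sliceGraph G α Hs).neighborSet v).ncard := by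
    intro p hp
    have hset : H.neighborSet p = (sliceGraph G α Hs).neighborSet p := by
      ext w
      exact ⟨fun hw => hw.1, fun hw => ⟨hw, hp, hp.trans hw.reachable⟩⟩
    rw [hset]
    obtain ⟨w⟩ := (hp : (sliceGraph G α Hs).Reachable v p)
    exact (aux_slice_ncard_reach hsk w).symm
  have hconn : H.Connected := by
    constructor
    rw [SimpleGraph.connected_iff]
    refine ⟨?_, ⟨⟨v, Reachable.refl v⟩⟩⟩
    rintro ⟨p, hp⟩ ⟨q, hq⟩
    have r1 := aux_lift_walk (v := v)
      ((hp : (sliceGraph G α Hs).Reachable v p).some) (Reachable.refl v)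
    have r2 := aux_lift_walk (v := v)
      ((hq : (sliceGraph G α Hs).Reachable v q).some) (Reachable.refl v)
    exact r1.symm.trans r2
  exact ⟨geo, ⟨_, hval⟩,
    { connected := hconn, regular := ⟨_, hval⟩, geodesic := geo }⟩
end

section
/- Let (Γ, α, θ) be a d-valent d-independent 1-skeleton in ℝ^d that is pointed, and for each vertex p let X_p = {u ∈ (ℝ^d)* : ⟨u, α(e)⟩ ≥ 0 for all e ∈ E^p}. Then the cones X_p cover the dual space: ⋃_{p ∈ V_Γ} X_p = (ℝ^d)*. -/
open SimpleGraph

universe u u' v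

variable {V : Type u}

/-- The polyhedral cone `X_p` dual to the axial vectors at `p`. -/
def XCone {V : Type u} {d : ℕ} (G : SimpleGraph V) (α : AxialFn G (Fin d → ℝ)) (p : V) :
    Set ((Fin d → ℝ) →ₗ[ℝ] ℝ) :=
  {u | ∀ ⦃q : V⦄ (h : G.Adj p q), 0 ≤ u (α h)}

/-- A functional nonzero on each member of a finset of nonzero vectors. -/
lemma exists_generic_functional {d : ℕ} (A : Finset (Fin d → ℝ)) (hA : ∀ a ∈ A, a ≠ 0) :
    ∃ ξ : (Fin d → ℝ) →ₗ[ℝ] ℝ, ∀ a ∈ A, ξ a ≠ 0 := by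
  classical
  by_contra hcon
  push_neg at hcon
  set S : (Fin d → ℝ) → Subspace ℝ ((Fin d → ℝ) →ₗ[ℝ] ℝ) :=
    fun a => LinearMap.ker (LinearMap.applyₗ a) with hS
  have htop : ⊤ ∉ A.image S := by
    intro htop
    obtain ⟨a, ha, haeq⟩ := Finset.mem_image.1 htop
    obtain ⟨i, hi⟩ : ∃ i, a i ≠ 0 := by
      by_contra h0
      push_neg at h0
      exact hA a ha (funext h0)
    have : (LinearMap.proj i : (Fin d → ℝ) →ₗ[ℝ] ℝ) ∈ S a := haeq ▸ Submodule.mem_top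
    exact hi this
  apply Subspace.biUnion_ne_univ_of_top_notMem htop
  apply Set.eq_univ_iff_forall.2
  intro ξ
  obtain ⟨a, ha, hza⟩ := hcon ξ
  exact Set.mem_biUnion (Finset.mem_image_of_mem S ha) hza

/-- In a `d`-valent `d`-independent skeleton, every axial vector is nonzero. -/
lemma axial_ne_zero_of_kIndep {V : Type u} [Fintype V] {d : ℕ}
    (G : SimpleGraph V) (α : AxialFn G (Fin d → ℝ))
    (hd : Valency G d) (hind : kIndep G α d) {p q : V} (h : G.Adj p q) :
    α h ≠ 0 := by
  classical
  haveI : Fintype ↥(G.neighborSet p) := Fintype.ofFinite _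
  have hcard : (Finset.univ : Finset ↥(G.neighborSet p)).card = d := by
    rw [Finset.card_univ, ← Nat.card_eq_fintype_card, Nat.card_coe_set_eq]
    exact hd p
  have hli := hind p Finset.univ hcard
  have := hli.ne_zero ⟨⟨q, h⟩, by simp⟩
  exact this

/-- For a pointed `d`-valent `d`-independent 1-skeleton in `ℝ^d`, the cones
`X_p = {u : ⟨u, α(e)⟩ ≥ 0 for all e ∈ E^p}` cover the dual space. -/
theorem cones_of_pointed_skeleton_cover_dual
    {V : Type u} [Fintype V] {d : ℕ}
    (G : SimpleGraph V) (θ : GraphConn G) (lam : CompatSys G)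
    (α : AxialFn G (Fin d → ℝ))
    (hsk : IsOneSkeleton G θ lam α) (hd : Valency G d) (hind : kIndep G α d)
    (hpt : PointedSkel G α) :
    ⋃ p : V, XCone G α p = Set.univ := by
  classical
  apply Set.eq_univ_iff_forall.2
  intro u
  rw [Set.mem_iUnion]
  -- the finite set of axial vectors
  set f : V × V → (Fin d → ℝ) :=
    fun x => if h : G.Adj x.1 x.2 then α h else 0 with hf
  set A : Finset (Fin d → ℝ) := (Finset.univ.image f).erase 0 with hA
  have hAne : ∀ a ∈ A, a ≠ 0 := fun a ha => Finset.ne_of_mem_erase ha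
  have hmem : ∀ ⦃p q : V⦄ (h : G.Adj p q), α h ∈ A := by
    intro p q h
    refine Finset.mem_erase.2 ⟨axial_ne_zero_of_kIndep G α hd hind h, ?_⟩
    refine Finset.mem_image.2 ⟨(p, q), Finset.mem_univ _, ?_⟩
    simp only [hf, dif_pos h]
  obtain ⟨ξ, hξ⟩ := exists_generic_functional A hAne
  -- choose a small positive t
  have hev : ∀ᶠ t in nhdsWithin (0 : ℝ) (Set.Ioi 0),
      ∀ a ∈ A, u a ≠ 0 → t * |ξ a| < |u a| := by
    rw [Filter.eventually_all_finset]
    intro a ha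
    by_cases h0 : u a = 0
    · filter_upwards with t ht; exact absurd h0 ht
    · have hlt : (0:ℝ) < |u a| := abs_pos.2 h0
      have htend : Filter.Tendsto (fun t : ℝ => t * |ξ a|)
          (nhdsWithin (0 : ℝ) (Set.Ioi 0)) (nhds 0) := by
        have : Filter.Tendsto (fun t : ℝ => t * |ξ a|) (nhds 0) (nhds (0 * |ξ a|)) :=
          (continuous_id.mul continuous_const).tendsto 0
        rw [zero_mul] at this
        exact this.mono_left nhdsWithin_le_nhds
      filter_upwards [htend.eventually_lt_const hlt] with t ht _
      exact ht
  obtain ⟨t, ht, htpos⟩ := (hev.and self_mem_nhdsWithin).exists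
  set ξ' : (Fin d → ℝ) →ₗ[ℝ] ℝ := u + t • ξ with hξ'
  have happ : ∀ a, ξ' a = u a + t * ξ a := by
    intro a; simp [hξ']
  have hgen : GenericCovec G α ξ' := by
    intro p q h
    have ha := hmem h
    rw [happ]
    by_cases h0 : u (α h) = 0
    · rw [h0, zero_add]
      exact mul_ne_zero (ne_of_gt htpos) (hξ _ ha)
    · intro hz
      have h1 : u (α h) = -(t * ξ (α h)) := by linarith
      have h2 : t * |ξ (α h)| < |u (α h)| := ht _ ha h0
      rw [h1, abs_neg, abs_mul, abs_of_pos htpos] at h2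
      exact lt_irrefl _ h2
  obtain ⟨p, hp, -⟩ := hpt ξ' hgen
  refine ⟨p, ?_⟩
  intro q h
  by_contra hneg
  push_neg at hneg
  have hpos := hp h
  rw [happ] at hpos
  have h2 : t * |ξ (α h)| < |u (α h)| := ht _ (hmem h) (ne_of_lt hneg)
  rw [abs_of_neg hneg] at h2
  have : t * ξ (α h) ≤ t * |ξ (α h)| :=
    mul_le_mul_of_nonneg_left (le_abs_self _) (le_of_lt htpos)
  linarith
end
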